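/- If κ is a regular infinite cardinal and λ > κ is inaccessible, then Col(κ,<λ) is λ-c.c.: every antichain of Col(κ,<λ) has cardinality less than λ. -/

import Mathlib

open Cardinal

universe u

/-- A condition in the Levy collapse `Col(κ,o)` (collapsing the ordinal `o` to `κ`):
a partial function from `κ` to `o` whose domain has cardinality `< κ`. -/
def IsLevyCond (κ : Cardinal.{u}) (o : Ordinal.{u}) (f : Ordinal.{u} → Option Ordinal.{u}) :
    Prop :=
  (∀ a, f a ≠ none → a < κ.ord) ∧ (∀ a b, f a = some b → b < o) ∧
    #(↥{a : Ordinal.{u} | f a ≠ none}) < Cardinal.lift.{u + 1} κ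

/-- The Levy collapse `Col(κ,<λ)`: the `<κ`-support product of `Col(κ,α)` over `α < λ`.
Conditions are functions `p` with `p(α) ∈ Col(κ,α)` for each `α < λ` (and `p(α)` the
empty condition for `α ≥ λ`) such that `|{α < λ : p(α) ≠ ∅}| < κ`. -/
def LevyColLt (κ lam : Cardinal.{u}) : Type (u + 1) :=
  {p : Ordinal.{u} → Ordinal.{u} → Option Ordinal.{u} //
    (∀ α, α < lam.ord → IsLevyCond κ α (p α)) ∧
    (∀ α, ¬ α < lam.ord → p α = fun _ => none) ∧
    #(↥{α : Ordinal.{u} | p α ≠ fun _ => none}) < Cardinal.lift.{u + 1} κ}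

/-- The coordinatewise order on `Col(κ,<λ)`: `p ≤ q` iff `p(α) ⊇ q(α)` for all `α`. -/
def LevyColLt.le {κ lam : Cardinal.{u}} (p q : LevyColLt κ lam) : Prop :=
  ∀ α a b, q.1 α a = some b → p.1 α a = some b

namespace LevyCC

open Ordinal Set

variable {κ lam : Cardinal.{u}}

/-- Union of two pointwise-compatible conditions is a condition below both. -/
lemma exists_lower (hκ : κ.IsRegular) (p q : LevyColLt κ lam)
    (h : ∀ α a b b', p.1 α a = some b → q.1 α a = some b' → b = b') :
    ∃ r, LevyColLt.le r p ∧ LevyColLt.le r q := by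
  classical
  have hℵ : ℵ₀ ≤ Cardinal.lift.{u + 1} κ := by
    rw [← Cardinal.lift_aleph0.{u+1, u}]
    exact Cardinal.lift_le.mpr hκ.aleph0_le
  set rf : Ordinal.{u} → Ordinal.{u} → Option Ordinal.{u} :=
    fun α a => if p.1 α a = none then q.1 α a else p.1 α a with hrf
  have hcase : ∀ α a b, rf α a = some b → p.1 α a = some b ∨ q.1 α a = some b := by
    intro α a b hb
    by_cases hp : p.1 α a = none
    · right; simpa [hrf, hp] using hb
    · left; simpa [hrf, hp] using hb
  have hsub : ∀ α, {a | rf α a ≠ none} ⊆ {a | p.1 α a ≠ none} ∪ {a | q.1 α a ≠ none} := by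
    intro α a ha
    simp only [mem_setOf_eq, mem_union]
    by_cases hp : p.1 α a = none
    · right; simpa [hrf, hp] using ha
    · left; exact hp
  refine ⟨⟨rf, ?_, ?_, ?_⟩, ?_, ?_⟩
  · intro α hα
    refine ⟨?_, ?_, ?_⟩
    · intro a ha
      obtain ⟨b, hb⟩ := Option.ne_none_iff_exists'.mp ha
      rcases hcase α a b hb with h' | h'
      · exact (p.2.1 α hα).1 a (by simp [h'])
      · exact (q.2.1 α hα).1 a (by simp [h'])
    · intro a b hb
      rcases hcase α a b hb with h' | h'
      · exact (p.2.1 α hα).2.1 a b h'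
      · exact (q.2.1 α hα).2.1 a b h'
    · refine lt_of_le_of_lt (mk_le_mk_of_subset (hsub α)) ?_
      exact lt_of_le_of_lt (mk_union_le _ _)
        (Cardinal.add_lt_of_lt hℵ ((p.2.1 α hα).2.2) ((q.2.1 α hα).2.2))
  · intro α hα
    funext a
    have hp := congrFun (p.2.2.1 α hα) a
    have hq := congrFun (q.2.2.1 α hα) a
    simp [hrf, hp, hq]
  · have hsub2 : {α | rf α ≠ fun _ => none} ⊆
        {α | p.1 α ≠ fun _ => none} ∪ {α | q.1 α ≠ fun _ => none} := by
      intro α hα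
      simp only [mem_setOf_eq, mem_union]
      by_contra hc
      push_neg at hc
      apply hα
      funext a
      simp [hrf, congrFun hc.1 a, congrFun hc.2 a]
    refine lt_of_le_of_lt (mk_le_mk_of_subset hsub2) ?_
    exact lt_of_le_of_lt (mk_union_le _ _) (Cardinal.add_lt_of_lt hℵ p.2.2.2 q.2.2.2)
  · intro α a b hb
    simp [hrf, hb]
  · intro α a b hb
    by_cases hp : p.1 α a = none
    · simpa [hrf, hp] using hb
    · obtain ⟨b', hb'⟩ := Option.ne_none_iff_exists'.mp hp
      rw [h α a b' b hb' hb] at hb'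
      simp [hrf, hp, hb']

/-- The trace of a condition below level `β`. -/
noncomputable def trace (κ : Cardinal.{u}) (β : Ordinal.{u})
    (f : Ordinal.{u} → Ordinal.{u} → Option Ordinal.{u}) :
    Ordinal.{u} → Ordinal.{u} → Option Ordinal.{u} :=
  fun α a => if α < β ∧ a < κ.ord then f α a else none

/-- A partial two-variable function is `Tame` if its support and values are bounded. -/
def Tame (κ : Cardinal.{u}) (β : Ordinal.{u})
    (t : Ordinal.{u} → Ordinal.{u} → Option Ordinal.{u}) : Prop :=
  ∀ α a b, t α a = some b → α < β ∧ a < κ.ord ∧ b < β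

/-- Encode a tame function into a small function space. -/
noncomputable def encode (κ : Cardinal.{u}) (β : Ordinal.{u})
    (t : Ordinal.{u} → Ordinal.{u} → Option Ordinal.{u}) :
    (Iio β × Iio κ.ord) → Option (Iio β) :=
  fun x => match t x.1.1 x.2.1 with
  | none => none
  | some b => if h : b < β then some ⟨b, h⟩ else none

lemma encode_inj {κ : Cardinal.{u}} {β : Ordinal.{u}} {t₁ t₂}
    (h₁ : Tame κ β t₁) (h₂ : Tame κ β t₂) (h : encode κ β t₁ = encode κ β t₂) :
    t₁ = t₂ := by
  funext α a
  rcases ht₁ : t₁ α a with _ | b₁ <;> rcases ht₂ : t₂ α a with _ | b₂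
  · rfl
  · obtain ⟨hα, ha, hb⟩ := h₂ α a b₂ ht₂
    have := congrFun h (⟨α, hα⟩, ⟨a, ha⟩)
    simp [encode, ht₁, ht₂, hb] at this
  · obtain ⟨hα, ha, hb⟩ := h₁ α a b₁ ht₁
    have := congrFun h (⟨α, hα⟩, ⟨a, ha⟩)
    simp [encode, ht₁, ht₂, hb] at this
  · obtain ⟨hα, ha, hb⟩ := h₁ α a b₁ ht₁
    obtain ⟨_, _, hb'⟩ := h₂ α a b₂ ht₂
    have := congrFun h (⟨α, hα⟩, ⟨a, ha⟩)
    simp [encode, ht₁, ht₂, hb, hb'] at this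
    exact congrArg (fun x => some x.1) this

/-- Counting: the encoding target is small. -/
lemma count_lt (hlam : lam.IsInaccessible) (hκlam : κ < lam)
    {β : Ordinal.{u}} (hβ : β < lam.ord) :
    #((Iio β × Iio κ.ord) → Option (Iio β)) < Cardinal.lift.{u + 1} lam := by
  have hβc : β.card < lam := Cardinal.lt_ord.mp hβ
  set c : Cardinal.{u} := (β.card ⊔ κ) ⊔ ℵ₀ with hc
  have hci : ℵ₀ ≤ c := le_max_right _ _
  have hclt : c < lam := max_lt (max_lt hβc hκlam) hlam.1
  have key : (β.card + 1) ^ (β.card * κ) < lam := by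
    have hbase : β.card + 1 ≤ 2 ^ c := by
      refine le_trans ?_ (Cardinal.cantor c).le
      calc β.card + 1 ≤ c + c :=
            add_le_add ((le_max_left _ _).trans (le_max_left _ _))
              (le_trans Cardinal.one_le_aleph0 hci)
        _ = c := Cardinal.add_eq_self hci
    have hexp : β.card * κ ≤ c := by
      calc β.card * κ ≤ c * c :=
            mul_le_mul' ((le_max_left _ _).trans (le_max_left _ _))
              ((le_max_right _ _).trans (le_max_left _ _))
        _ = c := Cardinal.mul_eq_self hci
    calc (β.card + 1) ^ (β.card * κ) ≤ (2 ^ c) ^ (β.card * κ) :=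
          Cardinal.power_le_power_right hbase
      _ ≤ (2 ^ c) ^ c := Cardinal.power_le_power_left (Cardinal.power_ne_zero c two_ne_zero) hexp
      _ = 2 ^ (c * c) := by rw [← Cardinal.power_mul]
      _ = 2 ^ c := by rw [Cardinal.mul_eq_self hci]
      _ < lam := hlam.isStrongPrelimit hclt
  have hmk : #((Iio β × Iio κ.ord) → Option (Iio β)) =
      Cardinal.lift.{u + 1} ((β.card + 1) ^ (β.card * κ)) := by
    rw [← Cardinal.power_def, Cardinal.mk_option, Ordinal.mk_Iio_ordinal,
      Cardinal.mk_prod, Cardinal.lift_id, Cardinal.lift_id, Ordinal.mk_Iio_ordinal,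
      Ordinal.mk_Iio_ordinal, Cardinal.card_ord, Cardinal.lift_power, Cardinal.lift_add,
      Cardinal.lift_one, Cardinal.lift_mul]
  rw [hmk]
  exact Cardinal.lift_lt.mpr key

/-- Bounding a small family of small ordinals indexed by a large-universe type. -/
lemma exists_bound {ι : Type (u + 1)} (f : ι → Ordinal.{u}) {c : Cardinal.{u}}
    (hc : c.IsRegular) (hι : #ι < Cardinal.lift.{u + 1} c) (hf : ∀ i, f i < c.ord) :
    ∃ β < c.ord, ∀ i, f i < β := by
  obtain ⟨c', hc', hlift⟩ := Cardinal.lt_lift_iff.mp hι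
  have hmk : #ι = #(ULift.{u + 1} c'.out) := by
    rw [Cardinal.mk_uLift, Cardinal.mk_out]; exact hlift.symm
  obtain ⟨e⟩ := Cardinal.eq.mp hmk
  set g : c'.out → Ordinal.{u} := fun j => f (e.symm ⟨j⟩) with hg
  refine ⟨Ordinal.lsub.{u, u} g, ?_, ?_⟩
  · refine Ordinal.lsub_lt_ord ?_ fun i => hf _
    rw [Cardinal.mk_out, hc.cof_eq]
    exact hc'
  · intro i
    have : f i = g (e i).down := by
      simp only [hg]
      congr 1
      have h' : (⟨(e i).down⟩ : ULift.{u + 1} c'.out) = e i := rfl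
      rw [h', e.symm_apply_apply]
    rw [this]
    exact Ordinal.lt_lsub g _

/-- Transfinite iteration of a closure operation, taking suprema at limits. -/
noncomputable def iterBound (g : Ordinal.{u} → Ordinal.{u}) (η : Ordinal.{u}) : Ordinal.{u} :=
  g (Ordinal.blsub.{u, u} η fun ζ hζ => iterBound g ζ)
termination_by η
decreasing_by exact hζ

theorem iterBound_eq (g : Ordinal.{u} → Ordinal.{u}) (η : Ordinal.{u}) :
    iterBound g η = g (Ordinal.blsub.{u, u} η fun ζ _ => iterBound g ζ) := by
  rw [iterBound]

theorem iterBound_strictMono {g : Ordinal.{u} → Ordinal.{u}} (hg : ∀ β, β < g β)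
    {ζ η : Ordinal.{u}} (h : ζ < η) : iterBound g ζ < iterBound g η := by
  rw [iterBound_eq g η]
  exact (Ordinal.lt_blsub (fun ζ' _ => iterBound g ζ') ζ h).trans (hg _)

theorem iterBound_lt {g : Ordinal.{u} → Ordinal.{u}} {κ lam : Cardinal.{u}}
    (hlam : lam.IsRegular) (hκlam : κ < lam)
    (hg2 : ∀ β < lam.ord, g β < lam.ord) :
    ∀ η ≤ κ.ord, iterBound g η < lam.ord := by
  intro η
  induction η using Ordinal.induction with
  | h η IH =>
    intro hηκ
    rw [iterBound_eq]
    apply hg2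
    apply Cardinal.blsub_lt_ord_of_isRegular hlam
    · exact lt_of_le_of_lt (by simpa [Cardinal.card_ord] using Ordinal.card_le_card hηκ) hκlam
    · exact fun ζ hζ => IH ζ hζ ((hζ.le).trans hηκ)

end LevyCC

/-- If `κ` is a regular infinite cardinal and `λ > κ` is inaccessible, then `Col(κ,<λ)`
is `λ`-c.c.: every antichain (set of pairwise incompatible conditions) has cardinality
less than `λ`. -/
theorem levyColLt_cc (κ lam : Cardinal.{u}) (hκ : κ.IsRegular)
    (hlam : lam.IsInaccessible) (hκlam : κ < lam)
    (A : Set (LevyColLt κ lam))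
    (hA : ∀ p ∈ A, ∀ q ∈ A, p ≠ q → ¬ ∃ r, LevyColLt.le r p ∧ LevyColLt.le r q) :
    #(↥A) < Cardinal.lift.{u + 1} lam := by
  classical
  open Set in
  have hlamreg : lam.IsRegular := hlam.isRegular
  have hΛlim : Order.IsSuccLimit lam.ord := Cardinal.isSuccLimit_ord hlam.1.le
  have hκolim : Order.IsSuccLimit κ.ord := Cardinal.isSuccLimit_ord hκ.aleph0_le
  have hltsucc : ∀ η : Ordinal.{u}, η < η + 1 := fun η => by
    rw [Ordinal.add_one_eq_succ]; exact Order.lt_succ η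
  -- tameness of traces
  have htame : ∀ (p : LevyColLt κ lam) {β B : Ordinal.{u}}, β ≤ B → B ≤ lam.ord →
      LevyCC.Tame κ B (LevyCC.trace κ β p.1) := by
    intro p β B hβB hBΛ α a b hb
    unfold LevyCC.trace at hb
    by_cases hc : α < β ∧ a < κ.ord
    · rw [if_pos hc] at hb
      have hαΛ : α < lam.ord := lt_of_lt_of_le hc.1 (hβB.trans hBΛ)
      exact ⟨lt_of_lt_of_le hc.1 hβB, hc.2,
        ((p.2.1 α hαΛ).2.1 a b hb).trans (lt_of_lt_of_le hc.1 hβB)⟩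
    · rw [if_neg hc] at hb; exact absurd hb (by simp)
  -- Step 1: witnesses with bounded support for every trace
  have hwit : ∀ β, β < lam.ord → ∃ γ, β < γ ∧ γ < lam.ord ∧ ∀ p ∈ A, ∃ q ∈ A,
      LevyCC.trace κ β q.1 = LevyCC.trace κ β p.1 ∧
      ∀ α, ¬ α < γ → q.1 α = fun _ => none := by
    intro β hβ
    set T : Set (Ordinal.{u} → Ordinal.{u} → Option Ordinal.{u}) :=
      {t | ∃ p ∈ A, LevyCC.trace κ β p.1 = t} with hT
    have hTlt : #(↥T) < Cardinal.lift.{u + 1} lam := by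
      have hinj : Function.Injective (fun t : T => LevyCC.encode κ β t.1) := by
        intro t₁ t₂ he
        obtain ⟨p₁, -, hp₁⟩ := t₁.2
        obtain ⟨p₂, -, hp₂⟩ := t₂.2
        apply Subtype.ext
        refine LevyCC.encode_inj ?_ ?_ he
        · rw [← hp₁]; exact htame p₁ le_rfl hβ.le
        · rw [← hp₂]; exact htame p₂ le_rfl hβ.le
      exact lt_of_le_of_lt (Cardinal.mk_le_of_injective hinj)
        (LevyCC.count_lt hlam hκlam hβ)
    have hwt : ∀ t : T, ∃ p, p ∈ A ∧ LevyCC.trace κ β p.1 = t.1 := fun t => t.2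
    choose W hW1 hW2 using hwt
    have hbd : ∀ t : T, ∃ δ < lam.ord,
        ∀ α : {α : Ordinal.{u} | (W t).1 α ≠ fun _ => none}, α.1 < δ := by
      intro t
      apply LevyCC.exists_bound _ hlamreg
      · exact lt_trans (W t).2.2.2 (Cardinal.lift_lt.mpr hκlam)
      · intro i
        by_contra hcon
        exact i.2 ((W t).2.2.1 i.1 hcon)
    choose δ hδ1 hδ2 using hbd
    obtain ⟨γ₀, hγ₀Λ, hγ₀⟩ := LevyCC.exists_bound δ hlamreg hTlt hδ1
    refine ⟨max γ₀ (β + 1), lt_of_lt_of_le (hltsucc β) (le_max_right _ _),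
      max_lt hγ₀Λ (by rw [Ordinal.add_one_eq_succ]; exact hΛlim.succ_lt hβ), ?_⟩
    intro p hp
    have htT : LevyCC.trace κ β p.1 ∈ T := ⟨p, hp, rfl⟩
    refine ⟨W ⟨_, htT⟩, hW1 _, hW2 _, ?_⟩
    intro α hα
    by_contra hne
    have h1 : α < δ ⟨_, htT⟩ := hδ2 ⟨_, htT⟩ ⟨α, hne⟩
    exact hα (lt_of_lt_of_le (h1.trans (hγ₀ _)) (le_max_left _ _))
  -- the closure function g
  set g : Ordinal.{u} → Ordinal.{u} :=
    fun β => if h : β < lam.ord then (hwit β h).choose else β + 1 with hgdef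
  have hg1 : ∀ β, β < g β := by
    intro β
    by_cases h : β < lam.ord
    · simp only [hgdef, dif_pos h]; exact (hwit β h).choose_spec.1
    · simp only [hgdef, dif_neg h]; exact hltsucc β
  have hg2 : ∀ β < lam.ord, g β < lam.ord := by
    intro β h
    simp only [hgdef, dif_pos h]
    exact (hwit β h).choose_spec.2.1
  have hgW : ∀ β, β < lam.ord → ∀ p ∈ A, ∃ q ∈ A,
      LevyCC.trace κ β q.1 = LevyCC.trace κ β p.1 ∧
      ∀ α, ¬ α < g β → q.1 α = fun _ => none := by
    intro β h p hp
    simp only [hgdef, dif_pos h]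
    exact (hwit β h).choose_spec.2.2 p hp
  -- the iteration and its supremum B
  set ib : Ordinal.{u} → Ordinal.{u} := LevyCC.iterBound g with hib
  have hibmono : ∀ {ζ η : Ordinal.{u}}, ζ < η → ib ζ < ib η :=
    fun h => LevyCC.iterBound_strictMono hg1 h
  have hibΛ : ∀ η ≤ κ.ord, ib η < lam.ord := LevyCC.iterBound_lt hlamreg hκlam hg2
  set B : Ordinal.{u} := Ordinal.blsub.{u, u} κ.ord (fun ζ _ => ib ζ) with hB
  have hBΛ : B < lam.ord := by
    rw [hB]
    exact Cardinal.blsub_lt_ord_of_isRegular hlamreg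
      (by rw [Cardinal.card_ord]; exact hκlam) (fun ζ hζ => hibΛ ζ hζ.le)
  have hibB : ∀ η, η < κ.ord → ib η < B := fun η h => Ordinal.lt_blsub _ η h
  have hsucc : ∀ η, η < κ.ord → η + 1 < κ.ord := fun η h => by
    rw [Ordinal.add_one_eq_succ]; exact hκolim.succ_lt h
  have hmemB : ∀ α, α < B → ∃ η, η < κ.ord ∧ α < ib η := by
    intro α hα
    rw [hB, Ordinal.lt_blsub_iff] at hα
    obtain ⟨ζ, hζ, hle⟩ := hα
    exact ⟨ζ + 1, hsucc ζ hζ, lt_of_le_of_lt hle (hibmono (hltsucc ζ))⟩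
  -- stage assignment
  have hstage : ∀ p : LevyColLt κ lam, ∃ η, η < κ.ord ∧
      ∀ α, p.1 α ≠ (fun _ => none) → α < B → α < ib η := by
    intro p
    set S : Set Ordinal.{u} := {α | p.1 α ≠ (fun _ => none) ∧ α < B} with hS
    have hSκ : #(↥S) < Cardinal.lift.{u + 1} κ :=
      lt_of_le_of_lt (Cardinal.mk_le_mk_of_subset (fun α hα => hα.1)) p.2.2.2
    obtain ⟨η, hηκ, hη⟩ := LevyCC.exists_bound
      (fun α : S => (hmemB α.1 α.2.2).choose) hκ hSκ
      (fun α => (hmemB α.1 α.2.2).choose_spec.1)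
    refine ⟨η, hηκ, ?_⟩
    intro α h1 h2
    have h3 := (hmemB α h2).choose_spec.2
    exact h3.trans (hibmono (hη ⟨α, h1, h2⟩))
  -- levels β'
  set β' : Ordinal.{u} → Ordinal.{u} :=
    fun η => Ordinal.blsub.{u, u} (η + 1) (fun ζ _ => ib ζ) with hβ'def
  have hβ'B : ∀ η, η < κ.ord → β' η ≤ B := by
    intro η hη
    apply Ordinal.blsub_le
    intro ζ hζ
    exact hibB ζ (hζ.trans (hsucc η hη))
  have hibβ' : ∀ η, ib η < β' η := fun η => Ordinal.lt_blsub _ η (hltsucc η)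
  have hgβ' : ∀ η, ib (η + 1) = g (β' η) := fun η => LevyCC.iterBound_eq g (η + 1)
  -- self-bounding: every element of A has support below ib (η+1) for its stage η
  have hself : ∀ p, p ∈ A → ∀ η, η < κ.ord →
      (∀ α, p.1 α ≠ (fun _ => none) → α < B → α < ib η) →
      ∀ α, ¬ α < ib (η + 1) → p.1 α = fun _ => none := by
    intro p hp η hηκ hstg
    have hβ'Λ : β' η < lam.ord := lt_of_le_of_lt (hβ'B η hηκ) hBΛ
    obtain ⟨q, hqA, hqt, hqb⟩ := hgW (β' η) hβ'Λ p hp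
    rw [← hgβ' η] at hqb
    have hcompat : ∀ α a b b', p.1 α a = some b → q.1 α a = some b' → b = b' := by
      intro α a b b' hb hb'
      have hsq : q.1 α ≠ (fun _ => none) := by
        intro hcon; rw [hcon] at hb'; simp at hb'
      have hαq : α < ib (η + 1) := by
        by_contra hcon; exact hsq (hqb α hcon)
      have hαB : α < B := hαq.trans (hibB (η + 1) (hsucc η hηκ))
      have hsp : p.1 α ≠ (fun _ => none) := by
        intro hcon; rw [hcon] at hb; simp at hb
      have hαη : α < ib η := hstg α hsp hαB
      have hαβ' : α < β' η := hαη.trans (hibβ' η)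
      have haκ : a < κ.ord := (p.2.1 α (hαB.trans hBΛ)).1 a (by simp [hb])
      have hpt := congrFun (congrFun hqt α) a
      simp only [LevyCC.trace, if_pos (⟨hαβ', haκ⟩ : α < β' η ∧ a < κ.ord)] at hpt
      rw [hb, hb'] at hpt
      exact (Option.some.inj hpt).symm
    obtain ⟨r, hr₁, hr₂⟩ := LevyCC.exists_lower hκ p q hcompat
    have hpq : p = q := by
      by_contra hne
      exact hA p hp q hqA hne ⟨r, hr₁, hr₂⟩
    intro α hα
    rw [hpq]
    exact hqb α hα
  -- the injection
  have hinj : Function.Injective (fun p : A =>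
      ((⟨(hstage p.1).choose, (hstage p.1).choose_spec.1⟩ : Iio κ.ord),
        LevyCC.encode κ B (LevyCC.trace κ (β' ((hstage p.1).choose)) p.1.1))) := by
    intro p₁ p₂ h
    simp only [Prod.mk.injEq, Subtype.mk.injEq] at h
    obtain ⟨h1, h2⟩ := h
    have h1 : (hstage p₁.1).choose = (hstage p₂.1).choose := congrArg Subtype.val h1
    set η : Ordinal.{u} := (hstage p₁.1).choose with hηdef
    have hηκ : η < κ.ord := (hstage p₁.1).choose_spec.1
    rw [← h1] at h2
    have hteq := LevyCC.encode_inj (htame p₁.1 (hβ'B η hηκ) hBΛ.le)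
      (htame p₂.1 (hβ'B η hηκ) hBΛ.le) h2
    have hstg₂ : ∀ α, p₂.1.1 α ≠ (fun _ => none) → α < B → α < ib η := by
      have := (hstage p₂.1).choose_spec.2
      rw [← h1] at this
      exact this
    have hb₁ := hself p₁.1 p₁.2 η hηκ (hstage p₁.1).choose_spec.2
    have hb₂ := hself p₂.1 p₂.2 η hηκ hstg₂
    have hcompat : ∀ α a b b', p₁.1.1 α a = some b → p₂.1.1 α a = some b' → b = b' := by
      intro α a b b' hb hb'
      have hs₂ : p₂.1.1 α ≠ (fun _ => none) := by
        intro hcon; rw [hcon] at hb'; simp at hb'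
      have hα₂ : α < ib (η + 1) := by
        by_contra hcon; exact hs₂ (hb₂ α hcon)
      have hαB : α < B := hα₂.trans (hibB (η + 1) (hsucc η hηκ))
      have hs₁ : p₁.1.1 α ≠ (fun _ => none) := by
        intro hcon; rw [hcon] at hb; simp at hb
      have hαη : α < ib η := (hstage p₁.1).choose_spec.2 α hs₁ hαB
      have hαβ' : α < β' η := hαη.trans (hibβ' η)
      have haκ : a < κ.ord := (p₁.1.2.1 α (hαB.trans hBΛ)).1 a (by simp [hb])
      have hpt := congrFun (congrFun hteq α) a
      simp only [LevyCC.trace, if_pos (⟨hαβ', haκ⟩ : α < β' η ∧ a < κ.ord)] at hpt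
      rw [hb, hb'] at hpt
      exact Option.some.inj hpt
    obtain ⟨r, hr₁, hr₂⟩ := LevyCC.exists_lower hκ p₁.1 p₂.1 hcompat
    apply Subtype.ext
    by_contra hne
    exact hA p₁.1 p₁.2 p₂.1 p₂.2 hne ⟨r, hr₁, hr₂⟩
  -- final counting
  calc #(↥A) ≤ #((Iio κ.ord) × ((Iio B × Iio κ.ord) → Option (Iio B))) :=
        Cardinal.mk_le_of_injective hinj
    _ < Cardinal.lift.{u + 1} lam := by
        rw [Cardinal.mk_prod, Cardinal.lift_id, Cardinal.lift_id]
        apply Cardinal.mul_lt_of_lt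
        · rw [← Cardinal.lift_aleph0.{u + 1, u}]
          exact Cardinal.lift_le.mpr hlam.1.le
        · rw [Ordinal.mk_Iio_ordinal, Cardinal.card_ord]
          exact Cardinal.lift_lt.mpr hκlam
        · exact LevyCC.count_lt hlam hκlam hBΛ
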